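/- Let P be a π-reversible stochastic matrix. Then ρ(GPG) ≤ ρ(P); that is, sup over nonzero f ∈ ℓ²₀(π) of |⟨f, (GPG)f⟩_π|/⟨f,f⟩_π is at most sup over nonzero f ∈ ℓ²₀(π) of |⟨f, Pf⟩_π|/⟨f,f⟩_π. -/

import Mathlib

open Matrix Finset

/-- Total mass of the orbit (block) `i` under `π`. -/
noncomputable def orbMass {n k : ℕ} (π : Fin n → ℝ) (part : Fin n → Fin k) (i : Fin k) : ℝ :=
  ∑ z ∈ Finset.univ.filter (fun z => part z = i), π z

/-- The Gibbs orbit kernel. -/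
noncomputable def gibbsKer {n k : ℕ} (π : Fin n → ℝ) (part : Fin n → Fin k) :
    Matrix (Fin n) (Fin n) ℝ :=
  Matrix.of fun x y => if part y = part x then π y / orbMass π part (part x) else 0

/-- The `π`-weighted inner product. -/
noncomputable def innerPi {n : ℕ} (π : Fin n → ℝ) (f g : Fin n → ℝ) : ℝ :=
  ∑ x, π x * f x * g x

/-- The second-largest eigenvalue in modulus of a `π`-reversible stochastic matrix,
in Rayleigh-quotient form: the sup over nonzero `f ∈ ℓ²₀(π)` of
`|⟨f, Qf⟩_π| / ⟨f, f⟩_π`. -/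
noncomputable def rho {n : ℕ} (π : Fin n → ℝ) (Q : Matrix (Fin n) (Fin n) ℝ) : ℝ :=
  sSup {r : ℝ | ∃ f : Fin n → ℝ, f ≠ 0 ∧ (∑ x, π x * f x) = 0 ∧
    r = |innerPi π f (Q.mulVec f)| / innerPi π f f}

section Aux
variable {n k : ℕ} (π : Fin n → ℝ) (part : Fin n → Fin k)

lemma orbMass_pos (hπpos : ∀ x, 0 < π x) (x : Fin n) : 0 < orbMass π part (part x) := by
  refine Finset.sum_pos (fun z _ => hπpos z) ⟨x, by simp⟩

lemma gibbs_rev (hπpos : ∀ x, 0 < π x) (x y : Fin n) :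
    π x * gibbsKer π part x y = π y * gibbsKer π part y x := by
  unfold gibbsKer
  simp only [Matrix.of_apply]
  by_cases h : part y = part x
  · rw [if_pos h, if_pos h.symm, h]; ring
  · rw [if_neg h, if_neg (fun hh => h hh.symm)]; ring

lemma gibbs_rowsum (hπpos : ∀ x, 0 < π x) (x : Fin n) :
    ∑ y, gibbsKer π part x y = 1 := by
  unfold gibbsKer
  simp only [Matrix.of_apply]
  rw [← Finset.sum_filter, ← Finset.sum_div]
  exact div_self (ne_of_gt (orbMass_pos π part hπpos x))

lemma gibbs_colsum (hπpos : ∀ x, 0 < π x) (y : Fin n) :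
    ∑ x, π x * gibbsKer π part x y = π y := by
  calc ∑ x, π x * gibbsKer π part x y = ∑ x, π y * gibbsKer π part y x :=
        Finset.sum_congr rfl fun x _ => gibbs_rev π part hπpos x y
    _ = π y := by rw [← Finset.mul_sum, gibbs_rowsum π part hπpos y, mul_one]

lemma innerPi_adj {Q : Matrix (Fin n) (Fin n) ℝ}
    (hrev : ∀ x y, π x * Q x y = π y * Q y x) (f h : Fin n → ℝ) :
    innerPi π f (Q.mulVec h) = innerPi π (Q.mulVec f) h := by
  unfold innerPi Matrix.mulVec
  simp only [dotProduct, Finset.mul_sum, Finset.sum_mul]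
  rw [Finset.sum_comm]
  refine Finset.sum_congr rfl fun y _ => Finset.sum_congr rfl fun x _ => ?_
  linear_combination (f x * h y) * hrev x y

lemma gibbs_meanzero (hπpos : ∀ x, 0 < π x) (f : Fin n → ℝ) :
    (∑ x, π x * (gibbsKer π part).mulVec f x) = ∑ y, π y * f y := by
  unfold Matrix.mulVec
  simp only [dotProduct, Finset.mul_sum]
  rw [Finset.sum_comm]
  refine Finset.sum_congr rfl fun y _ => ?_
  have : ∑ x, π x * (gibbsKer π part x y * f y)
      = (∑ x, π x * gibbsKer π part x y) * f y := by
    rw [Finset.sum_mul]; exact Finset.sum_congr rfl fun x _ => by ring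
  rw [this, gibbs_colsum π part hπpos y]

lemma gibbs_mulVec_eq (f : Fin n → ℝ) (x y : Fin n) (h : part y = part x) :
    (gibbsKer π part).mulVec f y = (gibbsKer π part).mulVec f x := by
  unfold Matrix.mulVec gibbsKer
  simp only [dotProduct, Matrix.of_apply, h]

lemma gibbs_idem (hπpos : ∀ x, 0 < π x) (f : Fin n → ℝ) :
    (gibbsKer π part).mulVec ((gibbsKer π part).mulVec f) = (gibbsKer π part).mulVec f := by
  funext x
  show ∑ y, gibbsKer π part x y * (gibbsKer π part).mulVec f y = (gibbsKer π part).mulVec f x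
  calc ∑ y, gibbsKer π part x y * (gibbsKer π part).mulVec f y
      = ∑ y, gibbsKer π part x y * (gibbsKer π part).mulVec f x := by
        refine Finset.sum_congr rfl fun y _ => ?_
        by_cases h : part y = part x
        · rw [gibbs_mulVec_eq π part f x y h]
        · have : gibbsKer π part x y = 0 := by unfold gibbsKer; simp [h]
          rw [this, zero_mul, zero_mul]
    _ = (gibbsKer π part).mulVec f x := by
        rw [← Finset.sum_mul, gibbs_rowsum π part hπpos x, one_mul]

lemma innerPi_self_pos (hπpos : ∀ x, 0 < π x) {f : Fin n → ℝ} (hf : f ≠ 0) :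
    0 < innerPi π f f := by
  obtain ⟨x, hx⟩ := Function.ne_iff.mp hf
  refine Finset.sum_pos' (fun z _ => by nlinarith [hπpos z, sq_nonneg (f z)])
    ⟨x, Finset.mem_univ x, ?_⟩
  have h1 : 0 < f x * f x := mul_self_pos.mpr hx
  nlinarith [hπpos x]

lemma innerPi_cs (hπpos : ∀ x, 0 < π x) (f g : Fin n → ℝ) :
    (innerPi π f g) ^ 2 ≤ innerPi π f f * innerPi π g g := by
  unfold innerPi
  refine Finset.sum_sq_le_sum_mul_sum_of_sq_eq_mul _ (fun i _ => ?_) (fun i _ => ?_)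
    (fun i _ => ?_)
  · nlinarith [(hπpos i).le, sq_nonneg (f i)]
  · nlinarith [(hπpos i).le, sq_nonneg (g i)]
  · ring

lemma rayleigh_le_one (hπpos : ∀ x, 0 < π x)
    (P : Matrix (Fin n) (Fin n) ℝ)
    (hPnonneg : ∀ x y, 0 ≤ P x y) (hProw : ∀ x, ∑ y, P x y = 1)
    (hPrev : ∀ x y, π x * P x y = π y * P y x) (f : Fin n → ℝ) :
    |innerPi π f (P.mulVec f)| ≤ innerPi π f f := by
  have key : innerPi π f (P.mulVec f) = ∑ x, ∑ y, π x * P x y * f x * f y := by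
    unfold innerPi Matrix.mulVec
    simp only [dotProduct, Finset.mul_sum]
    refine Finset.sum_congr rfl fun x _ => Finset.sum_congr rfl fun y _ => by ring
  rw [key]
  have h1 : |∑ x, ∑ y, π x * P x y * f x * f y|
      ≤ ∑ x, ∑ y, π x * P x y * ((f x ^ 2 + f y ^ 2) / 2) := by
    refine (Finset.abs_sum_le_sum_abs _ _).trans (Finset.sum_le_sum fun x _ => ?_)
    refine (Finset.abs_sum_le_sum_abs _ _).trans (Finset.sum_le_sum fun y _ => ?_)
    have hnn : 0 ≤ π x * P x y := mul_nonneg (hπpos x).le (hPnonneg x y)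
    rw [mul_assoc, abs_mul, abs_of_nonneg hnn]
    refine mul_le_mul_of_nonneg_left ?_ hnn
    rw [abs_mul]
    nlinarith [sq_nonneg (|f x| - |f y|), sq_abs (f x), sq_abs (f y)]
  refine h1.trans ?_
  have h2 : ∑ x, ∑ y, π x * P x y * ((f x ^ 2 + f y ^ 2) / 2)
      = (∑ x, ∑ y, π x * P x y * f x ^ 2) / 2 + (∑ x, ∑ y, π x * P x y * f y ^ 2) / 2 := by
    rw [← add_div, ← Finset.sum_add_distrib,
      eq_div_iff (two_ne_zero (α := ℝ)), Finset.sum_mul]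
    refine Finset.sum_congr rfl fun x _ => ?_
    rw [← Finset.sum_add_distrib, Finset.sum_mul]
    exact Finset.sum_congr rfl fun y _ => by ring
  have hA : (∑ x, ∑ y, π x * P x y * f x ^ 2) = innerPi π f f := by
    refine Finset.sum_congr rfl fun x _ => ?_
    have : ∑ y, π x * P x y * f x ^ 2 = (π x * f x ^ 2) * ∑ y, P x y := by
      rw [Finset.mul_sum]; exact Finset.sum_congr rfl fun y _ => by ring
    rw [this, hProw, mul_one]; ring
  have hB : (∑ x, ∑ y, π x * P x y * f y ^ 2) = innerPi π f f := by
    rw [Finset.sum_comm]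
    refine Finset.sum_congr rfl fun y _ => ?_
    have : ∑ x, π x * P x y * f y ^ 2 = (π y * f y ^ 2) * ∑ x, P y x := by
      rw [Finset.mul_sum]
      exact Finset.sum_congr rfl fun x _ => by linear_combination (f y ^ 2) * hPrev x y
    rw [this, hProw, mul_one]; ring
  rw [h2, hA, hB]
  linarith
end Aux

lemma innerPi_self_nonneg {n : ℕ} (π : Fin n → ℝ) (hπpos : ∀ x, 0 < π x) (f : Fin n → ℝ) :
    0 ≤ innerPi π f f :=
  Finset.sum_nonneg fun z _ => by nlinarith [hπpos z, sq_nonneg (f z)]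

/-- `ρ(GPG) ≤ ρ(P)` for any `π`-reversible stochastic `P`. -/
theorem stmt4 {n k : ℕ} (hn : 0 < n)
    (π : Fin n → ℝ) (hπpos : ∀ x, 0 < π x) (hπsum : ∑ x, π x = 1)
    (part : Fin n → Fin k) (hpart : Function.Surjective part)
    (P : Matrix (Fin n) (Fin n) ℝ)
    (hPnonneg : ∀ x y, 0 ≤ P x y) (hProw : ∀ x, ∑ y, P x y = 1)
    (hPrev : ∀ x y, π x * P x y = π y * P y x) :
    rho π (gibbsKer π part * P * gibbsKer π part) ≤ rho π P := by
  set T : Set ℝ := {r : ℝ | ∃ f : Fin n → ℝ, f ≠ 0 ∧ (∑ x, π x * f x) = 0 ∧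
    r = |innerPi π f (P.mulVec f)| / innerPi π f f} with hT
  have hTbdd : BddAbove T := by
    refine ⟨1, fun r hr => ?_⟩
    obtain ⟨f, hf, _, rfl⟩ := hr
    rw [div_le_one (innerPi_self_pos π hπpos hf)]
    exact rayleigh_le_one π hπpos P hPnonneg hProw hPrev f
  have hrhoT : rho π P = sSup T := rfl
  have hT0 : 0 ≤ rho π P := by
    rw [hrhoT]
    rcases Set.eq_empty_or_nonempty T with h | ⟨r0, hr0⟩
    · rw [h, Real.sSup_empty]
    · obtain ⟨f, hf, hm, hr0'⟩ := hr0
      have h0 : 0 ≤ r0 :=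
        hr0' ▸ div_nonneg (abs_nonneg _) (innerPi_self_pos π hπpos hf).le
      exact h0.trans (le_csSup hTbdd ⟨f, hf, hm, hr0'⟩)
  rw [rho]
  refine Real.sSup_le (fun r hr => ?_) hT0
  obtain ⟨f, hf, hmean, rfl⟩ := hr
  set g : Fin n → ℝ := (gibbsKer π part).mulVec f with hg
  have hEq : innerPi π f ((gibbsKer π part * P * gibbsKer π part).mulVec f)
      = innerPi π g (P.mulVec g) := by
    rw [← Matrix.mulVec_mulVec, ← Matrix.mulVec_mulVec]
    exact innerPi_adj π (gibbs_rev π part hπpos) f (P.mulVec g)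
  have hfpos : 0 < innerPi π f f := innerPi_self_pos π hπpos hf
  have hgmean : (∑ x, π x * g x) = 0 := by
    rw [hg, gibbs_meanzero π part hπpos f, hmean]
  have e1 : innerPi π g g = innerPi π f g := by
    have h2 := innerPi_adj π (gibbs_rev π part hπpos) f g
    rw [hg, gibbs_idem π part hπpos f, ← hg] at h2
    exact h2.symm
  have hle : innerPi π g g ≤ innerPi π f f := by
    have cs := innerPi_cs π hπpos f g
    rw [← e1] at cs
    rcases eq_or_lt_of_le (innerPi_self_nonneg π hπpos g) with h | h
    · rw [← h]; exact hfpos.le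
    · nlinarith
  rw [hEq]
  by_cases hgz : g = 0
  · have : innerPi π g (P.mulVec g) = 0 := by
      rw [hgz]; unfold innerPi; simp
    rw [this]
    simpa using hT0
  · have hgpos : 0 < innerPi π g g := innerPi_self_pos π hπpos hgz
    have hmem : |innerPi π g (P.mulVec g)| / innerPi π g g ∈ T := ⟨g, hgz, hgmean, rfl⟩
    refine le_trans ?_ ((le_csSup hTbdd hmem).trans_eq hrhoT.symm)
    gcongr
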